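/- Let p > 1, let (X, Σ, m) be a measure space with 0 < m(X) < ∞, and let ρ : X → (0,∞) be measurable with ∫_X ρ dm < ∞ and ∫_X ρ^{−1/(p−1)} dm < ∞. For ε ∈ (0, 1/(2(p−1))) set r(ε) := (2+(1−p)ε)/(2+2(1−p)ε), s'(ε) := 2/((p−1)ε) and r'(ε) := (2+(1−p)ε)/((p−1)ε). Then liminf_{ε→0⁺} ε^p ( ∫_X ρ^{r'(ε)} dm )^{1/r'(ε)} ( ∫_X ρ^{−r'(ε)} dm )^{1/(r(ε) s'(ε))} ≤ (2/(p−1))^p · L_ρ, where L_ρ := liminf_{n→∞} n^{−p} ( ∫_X ρⁿ dm )^{1/n} ( ∫_X ρ^{−n} dm )^{1/n} ∈ [0,∞]. -/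

import Mathlib

open MeasureTheory Filter Topology
open scoped ENNReal NNReal

/-- The exponent `r(ε) = (2+(1−p)ε)/(2+2(1−p)ε)`. -/
noncomputable def zr (p ε : ℝ) : ℝ := (2 + (1 - p) * ε) / (2 + 2 * (1 - p) * ε)

/-- The exponent `s'(ε) = 2/((p−1)ε)`. -/
noncomputable def zs' (p ε : ℝ) : ℝ := 2 / ((p - 1) * ε)

/-- The exponent `r'(ε) = (2+(1−p)ε)/((p−1)ε)`. -/
noncomputable def zr' (p ε : ℝ) : ℝ := (2 + (1 - p) * ε) / ((p - 1) * ε)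

private lemma ennreal_rpow_ne_top {x : ℝ≥0∞} (hx : x ≠ 0) (hx' : x ≠ ⊤) (y : ℝ) : x ^ y ≠ ⊤ := by
  lift x to ℝ≥0 using hx'
  rw [← ENNReal.coe_rpow_of_ne_zero (by exact_mod_cast hx)]
  exact ENNReal.coe_ne_top

private lemma tendsto_rpow_exp_zero {x : ℝ≥0∞} (hx : x ≠ 0) (hx' : x ≠ ⊤) {t : ℕ → ℝ}
    (ht : Filter.Tendsto t Filter.atTop (nhds 0)) :
    Filter.Tendsto (fun n => x ^ t n) Filter.atTop (nhds 1) := by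
  have hpos : 0 < x.toReal := ENNReal.toReal_pos hx hx'
  have key : ∀ n, x ^ t n = ENNReal.ofReal (x.toReal ^ t n) := fun n => by
    rw [← ENNReal.ofReal_rpow_of_pos hpos, ENNReal.ofReal_toReal hx']
  have h2 : Filter.Tendsto (fun n => x.toReal ^ t n) Filter.atTop (nhds (x.toReal ^ (0 : ℝ))) :=
    (Real.continuousAt_const_rpow hpos.ne').tendsto.comp ht
  rw [Real.rpow_zero] at h2
  have h3 := (ENNReal.continuous_ofReal.tendsto 1).comp h2
  rw [ENNReal.ofReal_one] at h3
  exact h3.congr fun n => (key n).symm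

private lemma zr'_eval {p N : ℝ} (hp : 1 < p) (hN : 0 < N) :
    zr' p (2 / ((p - 1) * (N + 1))) = N := by
  have h1 : p - 1 ≠ 0 := by nlinarith
  have h2 : N + 1 ≠ 0 := by nlinarith
  have h3 : (p - 1) * (N + 1) ≠ 0 := mul_ne_zero h1 h2
  unfold zr'
  rw [div_eq_iff (by field_simp; exact div_ne_zero two_ne_zero h2)]
  field_simp
  ring

private lemma inv_zrzs'_eval {p N : ℝ} (hp : 1 < p) (hN : 2 ≤ N) :
    1 / (zr p (2 / ((p - 1) * (N + 1))) * zs' p (2 / ((p - 1) * (N + 1)))) =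
      (N - 1) / (N * (N + 1)) := by
  have h1 : p - 1 ≠ 0 := by nlinarith
  have h2 : N + 1 ≠ 0 := by nlinarith
  have h3 : (p - 1) * (N + 1) ≠ 0 := mul_ne_zero h1 h2
  have hε : (1 - p) * (2 / ((p - 1) * (N + 1))) = -(2 / (N + 1)) := by field_simp; ring
  have hε' : (p - 1) * (2 / ((p - 1) * (N + 1))) = 2 / (N + 1) := by field_simp
  have hzs : zs' p (2 / ((p - 1) * (N + 1))) = N + 1 := by
    unfold zs'; rw [hε']; field_simp
  have hzr : zr p (2 / ((p - 1) * (N + 1))) = N / (N - 1) := by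
    unfold zr
    rw [show 2 * (1 - p) * (2 / ((p - 1) * (N + 1))) = 2 * ((1 - p) * (2 / ((p - 1) * (N + 1)))) by ring, hε]
    have hN1' : (0:ℝ) < N - 1 := by nlinarith
    have hNp1 : (0:ℝ) < N + 1 := by nlinarith
    have hden : 2 + 2 * -(2 / (N + 1)) = 2 * (N - 1) / (N + 1) := by field_simp; ring
    rw [hden, div_eq_div_iff (by positivity) (by nlinarith)]
    field_simp
    ring
  rw [hzs, hzr]
  rw [div_mul_eq_mul_div, one_div_div]

/-- For `p > 1`, `0 < m(X) < ∞`, `ρ : X → (0,∞)` with `∫ ρ dm < ∞` and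
`∫ ρ^{−1/(p−1)} dm < ∞`, one has
`liminf_{ε→0⁺} ε^p (∫ ρ^{r'(ε)})^{1/r'(ε)} (∫ ρ^{−r'(ε)})^{1/(r(ε)s'(ε))} ≤ (2/(p−1))^p L_ρ`,
where `L_ρ = liminf_n n^{−p} (∫ ρ^n)^{1/n} (∫ ρ^{−n})^{1/n}`. -/
theorem stmt9 {X : Type*} [MeasurableSpace X] (m : MeasureTheory.Measure X) (p : ℝ)
    (hp : 1 < p) (hX0 : 0 < m Set.univ) (hXfin : m Set.univ < ⊤)
    (ρ : X → ℝ) (hmeas : Measurable ρ) (hpos : ∀ x, 0 < ρ x)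
    (h1 : ∫⁻ x, ENNReal.ofReal (ρ x) ∂m < ⊤)
    (h2 : ∫⁻ x, ENNReal.ofReal (ρ x ^ (-1 / (p - 1))) ∂m < ⊤) :
    Filter.liminf
      (fun ε : ℝ =>
        ENNReal.ofReal (ε ^ p) *
          (∫⁻ x, ENNReal.ofReal (ρ x ^ zr' p ε) ∂m) ^ (1 / zr' p ε) *
          (∫⁻ x, ENNReal.ofReal (ρ x ^ (-(zr' p ε))) ∂m) ^ (1 / (zr p ε * zs' p ε)))
      (nhdsWithin 0 (Set.Ioi 0)) ≤
    ENNReal.ofReal ((2 / (p - 1)) ^ p) *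
      Filter.liminf
        (fun n : ℕ =>
          ENNReal.ofReal ((n : ℝ) ^ (-p)) *
            (∫⁻ x, ENNReal.ofReal (ρ x ^ (n : ℝ)) ∂m) ^ ((n : ℝ)⁻¹) *
            (∫⁻ x, ENNReal.ofReal (ρ x ^ (-(n : ℝ))) ∂m) ^ ((n : ℝ)⁻¹))
        Filter.atTop := by
  have hp1 : (0:ℝ) < p - 1 := by linarith
  set μ := m Set.univ with hμdef
  have hμ0 : μ ≠ 0 := hX0.ne'
  have hμtop : μ ≠ ⊤ := hXfin.ne
  set q : ℝ := 1 / (p - 1) with hqdef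
  have hq0 : (0:ℝ) < q := by positivity
  set G : X → ℝ≥0∞ := fun x => ENNReal.ofReal (ρ x) with hGdef
  have hGmeas : Measurable G := ENNReal.measurable_ofReal.comp hmeas
  have hG0 : ∀ x, G x ≠ 0 := fun x => (ENNReal.ofReal_pos.mpr (hpos x)).ne'
  have hGt : ∀ x, G x ≠ ⊤ := fun x => ENNReal.ofReal_ne_top
  have hIrw : ∀ t : ℝ, (∫⁻ x, ENNReal.ofReal (ρ x ^ t) ∂m) = ∫⁻ x, G x ^ t ∂m :=
    fun t => lintegral_congr fun x => (ENNReal.ofReal_rpow_of_pos (hpos x)).symm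
  have hImeas : ∀ t : ℝ, Measurable fun x => G x ^ t := fun t =>
    ENNReal.continuous_rpow_const.measurable.comp hGmeas
  have hIpos : ∀ t : ℝ, 0 < ∫⁻ x, G x ^ t ∂m := by
    intro t
    rw [lintegral_pos_iff_support (hImeas t)]
    have hsupp : (Function.support fun x => G x ^ t) = Set.univ :=
      Set.eq_univ_of_forall fun x => (ENNReal.rpow_pos ((hG0 x).bot_lt) (hGt x)).ne'
    rw [hsupp]; exact hX0
  have hβ0 : (∫⁻ x, G x ^ (-q) ∂m) ≠ 0 := (hIpos _).ne'
  have hβt : (∫⁻ x, G x ^ (-q) ∂m) ≠ ⊤ := by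
    have hq' : -q = -1 / (p - 1) := by rw [hqdef]; ring
    rw [hq', ← hIrw]; exact h2.ne
  set β := ∫⁻ x, G x ^ (-q) ∂m with hβdef
  -- the sequence of epsilons
  set u : ℕ → ℝ := fun n => 2 / ((p - 1) * ((n:ℝ) + 1)) with hudef
  have hu_pos : ∀ n, 0 < u n := fun n => by
    rw [hudef]; exact div_pos two_pos (mul_pos hp1 (by positivity))
  have hu_tendsto : Tendsto u atTop (nhdsWithin (0:ℝ) (Set.Ioi 0)) := by
    rw [tendsto_nhdsWithin_iff]
    constructor
    · have h0 := tendsto_one_div_add_atTop_nhds_zero_nat.const_mul (2 / (p - 1))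
      rw [mul_zero] at h0
      refine h0.congr fun n => ?_
      rw [hudef]; field_simp
    · exact Eventually.of_forall fun n => hu_pos n
  -- constant
  set K := ENNReal.ofReal ((2 / (p - 1)) ^ p) with hKdef
  have hK0 : K ≠ 0 := (ENNReal.ofReal_pos.mpr (Real.rpow_pos_of_pos (by positivity) p)).ne'
  have hKt : K ≠ ⊤ := ENNReal.ofReal_ne_top
  -- correction sequence
  set e1 : ℕ → ℝ := fun n => (-(2/q)) * (1/((n:ℝ)+1)) with he1def
  set e2 : ℕ → ℝ := fun n => (2/q) * (1/((n:ℝ)+1)) + (-(2/(n:ℝ))) * (1/((n:ℝ)+1)) with he2def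
  set c : ℕ → ℝ≥0∞ := fun n => β ^ e1 n * μ ^ e2 n with hcdef
  have hc0 : ∀ n, c n ≠ 0 := fun n => by
    rw [hcdef]
    exact mul_ne_zero (ENNReal.rpow_pos hβ0.bot_lt hβt).ne' (ENNReal.rpow_pos hμ0.bot_lt hμtop).ne'
  have he1_tendsto : Tendsto e1 atTop (nhds 0) := by
    have h0 := tendsto_one_div_add_atTop_nhds_zero_nat.const_mul (-(2/q))
    rw [mul_zero] at h0; exact h0
  have he2_tendsto : Tendsto e2 atTop (nhds 0) := by
    have ha := tendsto_one_div_add_atTop_nhds_zero_nat.const_mul (2/q)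
    have hb : Tendsto (fun n : ℕ => -(2/(n:ℝ))) atTop (nhds 0) := by
      have hb' := (tendsto_const_div_atTop_nhds_zero_nat (𝕜 := ℝ) 2).neg
      rwa [neg_zero] at hb'
    have hsum := ha.add (hb.mul tendsto_one_div_add_atTop_nhds_zero_nat)
    rwa [show (2:ℝ)/q * 0 + 0 * 0 = 0 by ring] at hsum
  have hc_tendsto : Tendsto c atTop (nhds 1) := by
    have ha := tendsto_rpow_exp_zero hβ0 hβt he1_tendsto
    have hb := tendsto_rpow_exp_zero hμ0 hμtop he2_tendsto
    have := ENNReal.Tendsto.mul ha (Or.inl one_ne_zero) hb (Or.inl one_ne_zero)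
    simpa using this
  have hKc_tendsto : Tendsto (fun n => K * c n) atTop (nhds K) := by
    have := ENNReal.Tendsto.const_mul (a := K) hc_tendsto (Or.inl one_ne_zero)
    simpa using this
  have hKc_limsup : limsup (fun n => K * c n) atTop = K := hKc_tendsto.limsup_eq
  -- abbreviations for goal functions
  set F : ℝ → ℝ≥0∞ := fun ε =>
    ENNReal.ofReal (ε ^ p) *
      (∫⁻ x, ENNReal.ofReal (ρ x ^ zr' p ε) ∂m) ^ (1 / zr' p ε) *
      (∫⁻ x, ENNReal.ofReal (ρ x ^ (-(zr' p ε))) ∂m) ^ (1 / (zr p ε * zs' p ε)) with hFdef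
  set T : ℕ → ℝ≥0∞ := fun n =>
    ENNReal.ofReal ((n : ℝ) ^ (-p)) *
      (∫⁻ x, ENNReal.ofReal (ρ x ^ (n : ℝ)) ∂m) ^ ((n : ℝ)⁻¹) *
      (∫⁻ x, ENNReal.ofReal (ρ x ^ (-(n : ℝ))) ∂m) ^ ((n : ℝ)⁻¹) with hTdef
  have stepA : liminf F (nhdsWithin (0:ℝ) (Set.Ioi 0)) ≤ liminf (F ∘ u) atTop := by
    have hle : map u atTop ≤ nhdsWithin (0:ℝ) (Set.Ioi 0) := hu_tendsto
    have h : liminf F (nhdsWithin (0:ℝ) (Set.Ioi 0)) ≤ liminf F (map u atTop) :=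
      liminf_le_liminf_of_le hle
    rwa [← Filter.liminf_comp] at h
  have stepB : ∀ᶠ n in atTop, (F ∘ u) n ≤ ((fun k => K * c k) * T) n := by
    have hNbig : ∀ᶠ n : ℕ in atTop, (2:ℝ) ≤ (n:ℝ) ∧ q < (n:ℝ) := by
      filter_upwards [eventually_ge_atTop 2, eventually_ge_atTop (⌈q⌉₊ + 1)] with n hn1 hn2
      refine ⟨by exact_mod_cast hn1, ?_⟩
      have hle1 : q ≤ (⌈q⌉₊ : ℝ) := Nat.le_ceil q
      have hle2 : ((⌈q⌉₊ : ℕ) : ℝ) + 1 ≤ (n:ℝ) := by exact_mod_cast hn2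
      linarith
    filter_upwards [hNbig] with n hn
    simp only [Function.comp_apply, Pi.mul_apply, hFdef, hTdef, hudef]
    set N : ℝ := (n:ℝ) with hNdef
    obtain ⟨hn2, hqn⟩ := hn
    have hN0 : (0:ℝ) < N := by linarith
    have hN1 : (1:ℝ) < N := by linarith
    have hNp1 : (0:ℝ) < N + 1 := by linarith
    have hNne : N ≠ 0 := hN0.ne'
    have hNp1ne : N + 1 ≠ 0 := hNp1.ne'
    have hqne : q ≠ 0 := hq0.ne'
    rw [zr'_eval hp hN0, inv_zrzs'_eval hp hn2, hIrw N, hIrw (-N), one_div]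
    set A := ∫⁻ x, G x ^ N ∂m with hAdef
    set B := ∫⁻ x, G x ^ (-N) ∂m with hBdef
    have hB0 : B ≠ 0 := (hIpos _).ne'
    -- the epsilon-power factor
    have hεp : ENNReal.ofReal ((2 / ((p-1)*(N+1))) ^ p) = K * ENNReal.ofReal ((N+1) ^ (-p)) := by
      rw [hKdef, ← ENNReal.ofReal_mul (Real.rpow_nonneg (by positivity) p)]
      congr 1
      rw [show 2 / ((p-1)*(N+1)) = (2/(p-1)) * ((N+1)⁻¹) by field_simp,
        Real.mul_rpow (by positivity) (by positivity), Real.inv_rpow (by positivity),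
        ← Real.rpow_neg (by positivity)]
    have hmono : ENNReal.ofReal ((N+1) ^ (-p)) ≤ ENNReal.ofReal (N ^ (-p)) :=
      ENNReal.ofReal_le_ofReal (Real.rpow_le_rpow_of_nonpos hN0 (by linarith) (by linarith))
    -- Hölder: lower bound for B
    have hs1 : (1:ℝ) < N / q := (one_lt_div hq0).mpr hqn
    have hconj := Real.HolderConjugate.conjExponent hs1
    have hHolder := ENNReal.lintegral_mul_le_Lp_mul_Lq m hconj (hImeas (-q)).aemeasurable
      (aemeasurable_const : AEMeasurable (fun _ : X => (1:ℝ≥0∞)) m)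
    simp only [Pi.mul_apply, mul_one, ENNReal.one_rpow, lintegral_one] at hHolder
    simp only [← ENNReal.rpow_mul] at hHolder
    rw [show -q * (N/q) = -N by field_simp <;> ring, one_div_div] at hHolder
    have hconj_exp : 1 / Real.conjExponent (N/q) = 1 - q/N := by
      have hh := hconj.inv_add_inv_eq_one
      have hh2 := eq_sub_of_add_eq' hh
      rw [one_div, hh2, inv_div]
    rw [hconj_exp, ← hμdef, ← hβdef, ← hBdef] at hHolder
    -- hHolder : β ≤ B ^ (q/N) * μ ^ (1 - q/N)
    have hNq0 : (0:ℝ) ≤ N/q := by positivity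
    have step1 := ENNReal.rpow_le_rpow hHolder hNq0
    rw [ENNReal.mul_rpow_of_nonneg _ _ hNq0, ← ENNReal.rpow_mul, ← ENNReal.rpow_mul,
      show q/N * (N/q) = 1 by field_simp <;> ring, ENNReal.rpow_one] at step1
    -- step1 : β ^ (N/q) ≤ B * μ ^ ((1 - q/N) * (N/q))
    set L := β ^ (N/q) * μ ^ (-((1 - q/N) * (N/q))) with hLdef
    have hlow : L ≤ B := by
      calc L ≤ (B * μ ^ ((1 - q/N) * (N/q))) * μ ^ (-((1 - q/N) * (N/q))) :=
            mul_le_mul_left step1 _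
        _ = B := by
            rw [mul_assoc, ← ENNReal.rpow_add _ _ hμ0 hμtop, add_neg_cancel, ENNReal.rpow_zero,
              mul_one]
    have hLc : L ^ (-(2/(N*(N+1)))) = c n := by
      simp only [hLdef, hcdef, he1def, he2def]
      rw [ENNReal.mul_rpow_of_ne_top (ennreal_rpow_ne_top hβ0 hβt _)
        (ennreal_rpow_ne_top hμ0 hμtop _), ← ENNReal.rpow_mul, ← ENNReal.rpow_mul]
      congr 1
      · congr 1
        field_simp
        ring
      · congr 1
        rw [← hNdef]
        field_simp
        ring
    have hBcorr : B ^ (-(2/(N*(N+1)))) ≤ c n := by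
      rw [← hLc, ENNReal.rpow_neg, ENNReal.rpow_neg]
      exact ENNReal.inv_le_inv.mpr (ENNReal.rpow_le_rpow hlow (by positivity))
    have hBsplit : B ^ ((N-1)/(N*(N+1))) ≤ B ^ (N⁻¹) * c n := by
      rcases eq_or_ne B ⊤ with hBt | hBt
      · rw [hBt, ENNReal.top_rpow_of_pos (div_pos (by linarith) (by positivity)),
          ENNReal.top_rpow_of_pos (by positivity), ENNReal.top_mul (hc0 n)]
      · have hexp : (N-1)/(N*(N+1)) = N⁻¹ + (-(2/(N*(N+1)))) := by
          field_simp
          ring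
        rw [hexp, ENNReal.rpow_add _ _ hB0 hBt]
        exact mul_le_mul_right hBcorr _
    rw [hεp]
    calc K * ENNReal.ofReal ((N+1)^(-p)) * A ^ N⁻¹ * B ^ ((N-1)/(N*(N+1)))
        ≤ K * ENNReal.ofReal (N^(-p)) * A ^ N⁻¹ * (B ^ N⁻¹ * c n) :=
          mul_le_mul' (mul_le_mul_left (mul_le_mul_right hmono K) _) hBsplit
      _ = K * c n * (ENNReal.ofReal (N^(-p)) * A ^ N⁻¹ * B ^ N⁻¹) := by ring
  calc liminf F (nhdsWithin (0:ℝ) (Set.Ioi 0)) ≤ liminf (F ∘ u) atTop := stepA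
    _ ≤ liminf ((fun k => K * c k) * T) atTop := liminf_le_liminf stepB
    _ ≤ limsup (fun k => K * c k) atTop * liminf T atTop :=
        ENNReal.liminf_mul_le (Or.inl (by rw [hKc_limsup]; exact hK0))
          (Or.inl (by rw [hKc_limsup]; exact hKt))
    _ = K * liminf T atTop := by rw [hKc_limsup]
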